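/- arXiv:1402.5513 — 9 statements merged into one kernel-verified Lean document; each statement's English description precedes it below -/
import Mathlib

section
/- In the coin-tossing game, the strategy of Skeptic that announces M_n = -2^{-b_n - 1}, where b_n is the number of rounds k < n with x_k = 1, keeps the capital K_n nonnegative for all n and all moves of Forecaster and Reality. -/
open Filter Finset

/-- Capital process in the coin-tossing game, initial capital 1. -/
def capital (p M x : ℕ → ℝ) : ℕ → ℝ
  | 0 => 1
  | n + 1 => capital p M x n + M n * (x n - p n)

open scoped Classical in
/-- In the coin-tossing game, Skeptic's strategy `M n = -2^{-b n - 1}`, where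
`b n` is the number of rounds `k < n` with `x k = 1`, keeps the capital
nonnegative for all moves of Forecaster and Reality. -/
theorem stmt_0 (p x : ℕ → ℝ)
    (hp : ∀ n, p n ∈ Set.Icc (0 : ℝ) 1)
    (hx : ∀ n, x n = 0 ∨ x n = 1)
    (b : ℕ → ℕ)
    (hb : ∀ n, b n = ((Finset.range n).filter (fun k => x k = 1)).card)
    (M : ℕ → ℝ)
    (hM : ∀ n, M n = -(2 : ℝ) ^ (-(b n : ℤ) - 1)) :
    ∀ n, 0 ≤ capital p M x n := by
  suffices h : ∀ n, (2:ℝ) ^ (-(b n : ℤ)) ≤ capital p M x n by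
    intro n; exact le_trans (by positivity) (h n)
  intro n
  induction n with
  | zero => simp [capital, hb 0]
  | succ n ih =>
    have hbs : b (n+1) = b n + (if x n = 1 then 1 else 0) := by
      rw [hb (n+1), hb n, Finset.range_add_one, Finset.filter_insert]
      split <;> simp [Finset.card_insert_of_notMem, Finset.notMem_range_self]
    have hpn := hp n
    simp only [Set.mem_Icc] at hpn
    have ht : (0:ℝ) < (2:ℝ)^(-(b n:ℤ)-1) := zpow_pos (by norm_num) _
    have e2 : (2:ℝ)^(-(b n:ℤ)) = 2 * (2:ℝ)^(-(b n:ℤ)-1) := by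
      rw [show (-(b n:ℤ)) = 1 + (-(b n:ℤ)-1) by ring, zpow_add₀ (by norm_num : (2:ℝ) ≠ 0)]
      norm_num
    rcases hx n with h0 | h1
    · have hbe : b (n+1) = b n := by simp [hbs, h0]
      have hc : capital p M x (n+1) = capital p M x n + (2:ℝ)^(-(b n:ℤ)-1) * p n := by
        simp [capital, hM n, h0]
      rw [hbe, hc]
      nlinarith [hpn.1, mul_nonneg ht.le hpn.1]
    · have hbe : b (n+1) = b n + 1 := by simp [hbs, h1]
      have hc : capital p M x (n+1) = capital p M x n - (2:ℝ)^(-(b n:ℤ)-1) * (1 - p n) := by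
        simp [capital, hM n, h1]; ring
      have e1 : (-((b (n+1) : ℕ):ℤ)) = -(b n:ℤ) - 1 := by rw [hbe]; push_cast; ring
      rw [hc, e1]
      nlinarith [hpn.2, mul_nonneg ht.le (sub_nonneg.mpr hpn.2)]
end

section
/- In the coin-tossing game, Skeptic can force the event: if ∑_n p_n = ∞ then ∑_n x_n = ∞. Concretely, the strategy M_n = -2^{-b_n-1}, where b_n = #{k<n : x_k = 1}, keeps the capital nonnegative, and on any path with ∑_n p_n = ∞ and ∑_n x_n < ∞ the capital tends to infinity. -/
open Filter Finset

open scoped Classical in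
/-- Skeptic can force `∑ p n = ∞ → ∑ x n = ∞` with the strategy
`M n = -2^{-b n - 1}`: the capital stays nonnegative, and on any path with
`∑ p n = ∞` and `∑ x n < ∞` the capital tends to infinity. -/
theorem stmt_1 (p x : ℕ → ℝ)
    (hp : ∀ n, p n ∈ Set.Icc (0 : ℝ) 1)
    (hx : ∀ n, x n = 0 ∨ x n = 1)
    (b : ℕ → ℕ)
    (hb : ∀ n, b n = ((Finset.range n).filter (fun k => x k = 1)).card)
    (M : ℕ → ℝ)
    (hM : ∀ n, M n = -(2 : ℝ) ^ (-(b n : ℤ) - 1)) :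
    (∀ n, 0 ≤ capital p M x n) ∧
      (¬ Summable p → Summable x →
        Tendsto (capital p M x) atTop atTop) := by
  have hb0 : b 0 = 0 := by simp [hb]
  have hbs : ∀ n, b (n + 1) = if x n = 1 then b n + 1 else b n := by
    intro n
    rw [hb, hb, Finset.range_add_one, Finset.filter_insert]
    split
    · rw [Finset.card_insert_of_notMem (by simp)]
    · rfl
  have hlow : ∀ n, (2 : ℝ) ^ (-(b n : ℤ)) ≤ capital p M x n := by
    intro n
    induction n with
    | zero => simp [capital, hb0]
    | succ n ih =>
      have hMn := hM n
      have h2 : (0 : ℝ) < (2 : ℝ) ^ (-(b n : ℤ) - 1) := by positivity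
      rcases hx n with h0 | h1
      · have hbn : b (n + 1) = b n := by rw [hbs n]; simp [h0]
        have hinc : (0 : ℝ) ≤ M n * (x n - p n) := by
          rw [hMn, h0]
          have hp0 := (hp n).1
          nlinarith
        have : capital p M x (n + 1) = capital p M x n + M n * (x n - p n) := rfl
        rw [this, hbn]
        linarith
      · have hbn : b (n + 1) = b n + 1 := by rw [hbs n]; simp [h1]
        have hkey : -(2 : ℝ) ^ (-(b n : ℤ) - 1) ≤ M n * (x n - p n) := by
          rw [hMn, h1]
          have hp0 := (hp n).1
          nlinarith
        have heq : (2 : ℝ) ^ (-(b (n + 1) : ℤ))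
            = (2 : ℝ) ^ (-(b n : ℤ)) - (2 : ℝ) ^ (-(b n : ℤ) - 1) := by
          rw [hbn]
          push_cast
          rw [show -((b n : ℤ) + 1) = -(b n : ℤ) - 1 by ring,
            show (-(b n : ℤ)) = (-(b n : ℤ) - 1) + 1 by ring,
            zpow_add₀ (by norm_num : (2 : ℝ) ≠ 0)]
          ring
        have : capital p M x (n + 1) = capital p M x n + M n * (x n - p n) := rfl
        rw [this, heq]
        linarith
  refine ⟨fun n => le_trans (by positivity) (hlow n), ?_⟩
  intro hps hsx
  have hx0 : ∀ᶠ n in atTop, x n = 0 := by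
    filter_upwards [hsx.tendsto_atTop_zero.eventually
      (gt_mem_nhds (by norm_num : (0 : ℝ) < 1))] with n hn
    rcases hx n with h | h
    · exact h
    · rw [h] at hn; linarith
  obtain ⟨N, hN⟩ := eventually_atTop.1 hx0
  have hbconst : ∀ n, N ≤ n → b n = b N := by
    intro n hn
    induction n, hn using Nat.le_induction with
    | base => rfl
    | succ n hn ih =>
      rw [hbs n, if_neg (by rw [hN n hn]; norm_num), ih]
  set c : ℝ := (2 : ℝ) ^ (-(b N : ℤ) - 1) with hc
  have hcpos : 0 < c := by positivity
  set S : ℕ → ℝ := fun n => ∑ k ∈ Finset.range n, p k with hS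
  have hcap : ∀ n, N ≤ n → capital p M x n = capital p M x N + c * (S n - S N) := by
    intro n hn
    induction n, hn using Nat.le_induction with
    | base => simp
    | succ n hn ih =>
      have h1 : capital p M x (n + 1) = capital p M x n + M n * (x n - p n) := rfl
      have h2 : S (n + 1) = S n + p n := Finset.sum_range_succ p n
      rw [h1, ih, h2, hM n, hbconst n hn, hN n hn]
      ring
  have hStend : Tendsto S atTop atTop :=
    (not_summable_iff_tendsto_nat_atTop_of_nonneg (fun n => (hp n).1)).1 hps
  have hmain : Tendsto (fun n => capital p M x N + c * (S n - S N)) atTop atTop := by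
    apply tendsto_atTop_add_const_left
    apply Tendsto.const_mul_atTop hcpos
    exact tendsto_atTop_add_const_right _ _ hStend
  have heq : (fun n => capital p M x N + c * (S n - S N)) =ᶠ[atTop] capital p M x :=
    eventually_atTop.2 ⟨N, fun n hn => (hcap n hn).symm⟩
  exact hmain.congr' heq
end

section
/- In the coin-tossing game, Skeptic can force the event: if ∑_n p_n < ∞ then ∑_n x_n < ∞. Concretely, the strategy M_n = 2^{-c_n-1}, where c_n is the unique natural number with c_n - 1 ≤ ∑_{k=1}^n p_k < c_n, keeps the capital nonnegative, and on any path with ∑_n p_n < ∞ and ∑_n x_n = ∞ the capital satisfies limsup_n K_n = ∞. -/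
open Filter Finset

/-- Skeptic can force `∑ p n < ∞ → ∑ x n < ∞` with the strategy
`M n = 2^{-c n - 1}`, where `c n` is the natural number with
`c n - 1 ≤ ∑_{k ≤ n} p k < c n`: the capital stays nonnegative, and on any
path with `∑ p n < ∞` and `∑ x n = ∞` the limsup of the capital is infinite. -/
theorem stmt_2 (p x : ℕ → ℝ)
    (hp : ∀ n, p n ∈ Set.Icc (0 : ℝ) 1)
    (hx : ∀ n, x n = 0 ∨ x n = 1)
    (c : ℕ → ℕ)
    (hc : ∀ n, (c n : ℝ) - 1 ≤ ∑ k ∈ Finset.range (n + 1), p k ∧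
      ∑ k ∈ Finset.range (n + 1), p k < c n)
    (M : ℕ → ℝ)
    (hM : ∀ n, M n = (2 : ℝ) ^ (-(c n : ℤ) - 1)) :
    (∀ n, 0 ≤ capital p M x n) ∧
      (Summable p → ¬ Summable x →
        ∀ C : ℝ, ∃ᶠ n in atTop, C < capital p M x n) := by
  set S : ℕ → ℝ := fun n => ∑ k ∈ Finset.range (n + 1), p k with hSdef
  have hx0 : ∀ n, 0 ≤ x n := by
    intro n; rcases hx n with h | h <;> rw [h] <;> norm_num
  have hSnn : ∀ n, 0 ≤ S n := fun n => Finset.sum_nonneg fun k _ => (hp k).1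
  have hSsucc : ∀ n, S (n + 1) = S n + p (n + 1) := by
    intro n
    simp only [hSdef]
    rw [Finset.sum_range_succ]
  have hmono : ∀ n, c n ≤ c (n + 1) := by
    intro n
    have h1 : (c n : ℝ) - 1 ≤ S n := (hc n).1
    have h2 : S n ≤ S (n + 1) := by rw [hSsucc]; linarith [(hp (n + 1)).1]
    have h3 : S (n + 1) < c (n + 1) := (hc (n + 1)).2
    have : (c n : ℝ) < (c (n + 1) : ℝ) + 1 := by linarith
    exact_mod_cast Nat.lt_succ_iff.mp (by exact_mod_cast this)
  have hstep : ∀ n, c (n + 1) ≤ c n + 1 := by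
    intro n
    have h1 : (c (n + 1) : ℝ) - 1 ≤ S (n + 1) := (hc (n + 1)).1
    have h2 : S (n + 1) = S n + p (n + 1) := hSsucc n
    have h3 : S n < c n := (hc n).2
    have h4 : p (n + 1) ≤ 1 := (hp (n + 1)).2
    have : (c (n + 1) : ℝ) < (c n : ℝ) + 2 := by linarith
    have : c (n + 1) < c n + 2 := by exact_mod_cast this
    omega
  have hc1 : ∀ n, 1 ≤ c n := by
    intro n
    have h1 : (0 : ℝ) < (c n : ℝ) := lt_of_le_of_lt (hSnn n) (hc n).2
    have : 0 < c n := by exact_mod_cast h1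
    omega
  -- the key invariant
  have inv : ∀ n, (2 : ℝ) ^ (-(c n : ℤ)) + (2 : ℝ) ^ (-(c n : ℤ) - 1) * ((c n : ℝ) - S n)
      ≤ capital p M x (n + 1) := by
    intro n
    induction n with
    | zero =>
      show (2 : ℝ) ^ (-(c 0 : ℤ)) + (2 : ℝ) ^ (-(c 0 : ℤ) - 1) * ((c 0 : ℝ) - S 0)
        ≤ capital p M x 0 + M 0 * (x 0 - p 0)
      rw [hM 0]
      have hS0 : S 0 = p 0 := by simp [hSdef]
      have hP : (0 : ℝ) < (2 : ℝ) ^ (-(c 0 : ℤ) - 1) := by positivity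
      have hb : ((c 0 : ℝ) + 2) ≤ 2 ^ (c 0 + 1) := by
        have : c 0 + 2 ≤ 2 ^ (c 0 + 1) := Nat.succ_le_of_lt Nat.lt_two_pow_self
        exact_mod_cast this
      have h1 : (2 : ℝ) ^ (-(c 0 : ℤ)) = 2 * (2 : ℝ) ^ (-(c 0 : ℤ) - 1) := by
        rw [show -(c 0 : ℤ) = (-(c 0 : ℤ) - 1) + 1 by ring,
          zpow_add₀ (by norm_num : (2 : ℝ) ≠ 0)]
        ring
      have h2 : (2 : ℝ) ^ (-(c 0 : ℤ) - 1) * 2 ^ (c 0 + 1) = 1 := by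
        rw [show ((2 : ℝ) ^ (c 0 + 1) : ℝ) = (2 : ℝ) ^ ((c 0 : ℤ) + 1) by
          rw [← zpow_natCast]; push_cast; ring_nf]
        rw [← zpow_add₀ (by norm_num : (2 : ℝ) ≠ 0)]
        norm_num
      have hx0' : 0 ≤ x 0 := hx0 0
      have hK0 : capital p M x 0 = 1 := rfl
      rw [hK0, h1, hS0]
      nlinarith [mul_nonneg hP.le hx0', mul_le_mul_of_nonneg_left hb hP.le]
    | succ n ih =>
      have hKs : capital p M x (n + 1 + 1)
          = capital p M x (n + 1) + M (n + 1) * (x (n + 1) - p (n + 1)) := rfl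
      rw [hKs, hM (n + 1)]
      set m := c n with hm
      have hcase : c (n + 1) = m ∨ c (n + 1) = m + 1 := by
        have := hmono n; have := hstep n; omega
      set t : ℝ := (2 : ℝ) ^ (-(m : ℤ) - 2) with ht
      have htpos : (0 : ℝ) < t := by positivity
      have e0 : (2 : ℝ) ^ (-(m : ℤ)) = 4 * t := by
        rw [ht, show -(m : ℤ) = (-(m : ℤ) - 2) + 2 by ring,
          zpow_add₀ (by norm_num : (2 : ℝ) ≠ 0)]
        ring
      have e1 : (2 : ℝ) ^ (-(m : ℤ) - 1) = 2 * t := by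
        rw [ht, show -(m : ℤ) - 1 = (-(m : ℤ) - 2) + 1 by ring,
          zpow_add₀ (by norm_num : (2 : ℝ) ≠ 0)]
        ring
      have hxn : 0 ≤ x (n + 1) := hx0 (n + 1)
      have hpn : 0 ≤ p (n + 1) := (hp (n + 1)).1
      have hSn : S n < m := (hc n).2
      have hSn1 : S (n + 1) = S n + p (n + 1) := hSsucc n
      rcases hcase with h | h
      · rw [h, e0, e1, hSn1]
        rw [e0, e1] at ih
        nlinarith [mul_nonneg (mul_nonneg (by norm_num : (0:ℝ) ≤ 2) htpos.le) hxn]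
      · have e2 : (-(c (n + 1) : ℤ)) = -(m : ℤ) - 1 := by rw [h]; push_cast; ring
        have e3 : (-(m : ℤ) - 1 - 1) = -(m : ℤ) - 2 := by ring
        have e4 : ((c (n + 1) : ℝ)) = (m : ℝ) + 1 := by rw [h]; push_cast; ring
        rw [e2, e3, e4, e1, ← ht, hSn1]
        rw [e0, e1] at ih
        nlinarith [mul_nonneg htpos.le hxn]
  have part1 : ∀ n, 0 ≤ capital p M x n := by
    intro n
    cases n with
    | zero => norm_num [capital]
    | succ n =>
      have h1 := inv n
      have h2 : (0 : ℝ) < (2 : ℝ) ^ (-(c n : ℤ)) := by positivity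
      have h3 : (0 : ℝ) ≤ (2 : ℝ) ^ (-(c n : ℤ) - 1) := by positivity
      have h4 : S n < c n := (hc n).2
      nlinarith
  refine ⟨part1, ?_⟩
  intro hps hxs C
  -- c is monotone and bounded, hence eventually constant
  have hcm : Monotone c := monotone_nat_of_le_succ hmono
  have hbdd : BddAbove (Set.range c) := by
    have hP : ∀ n, S n ≤ ∑' k, p k := by
      intro n
      exact Summable.sum_le_tsum _ (fun k _ => (hp k).1) hps
    refine ⟨⌈∑' k, p k⌉₊ + 1, ?_⟩
    rintro _ ⟨n, rfl⟩
    have h1 : (c n : ℝ) - 1 ≤ ∑' k, p k := le_trans (hc n).1 (hP n)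
    have h2 : (∑' k, p k) ≤ ⌈∑' k, p k⌉₊ := Nat.le_ceil _
    have : (c n : ℝ) ≤ (⌈∑' k, p k⌉₊ : ℝ) + 1 := by linarith
    exact_mod_cast this
  obtain ⟨N, hNmax⟩ : ∃ N, ∀ n, N ≤ n → c n = c N := by
    have hmem := Nat.sSup_mem (Set.range_nonempty c) hbdd
    obtain ⟨N, hN⟩ := hmem
    refine ⟨N, fun n hn => le_antisymm ?_ (hcm hn)⟩
    rw [hN]
    exact le_csSup hbdd ⟨n, rfl⟩
  set ε : ℝ := (2 : ℝ) ^ (-(c N : ℤ) - 1) with hε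
  have hεpos : 0 < ε := by positivity
  have key : ∀ n, N ≤ n →
      capital p M x n = capital p M x N + ε * ∑ k ∈ Finset.Ico N n, (x k - p k) := by
    intro n hn
    induction n, hn using Nat.le_induction with
    | base => simp
    | succ n hn ih =>
      have hMn : M n = ε := by rw [hM n, hNmax n hn, hε]
      have : capital p M x (n + 1) = capital p M x n + M n * (x n - p n) := rfl
      rw [this, ih, hMn, Finset.sum_Ico_succ_top hn]
      ring
  set P : ℝ := ∑' k, p k with hP
  set X : ℕ → ℝ := fun n => ∑ k ∈ Finset.range n, x k with hX
  have hXtop : Tendsto X atTop atTop :=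
    (not_summable_iff_tendsto_nat_atTop_of_nonneg hx0).mp hxs
  have hlow : ∀ n, N ≤ n →
      capital p M x N + ε * (X n - X N - P) ≤ capital p M x n := by
    intro n hn
    rw [key n hn]
    have h1 : ∑ k ∈ Finset.Ico N n, (x k - p k)
        = (∑ k ∈ Finset.Ico N n, x k) - ∑ k ∈ Finset.Ico N n, p k :=
      Finset.sum_sub_distrib _ _
    have h2 : (∑ k ∈ Finset.Ico N n, x k) = X n - X N := by
      rw [hX]
      rw [Finset.sum_Ico_eq_sub _ hn]
    have h3 : (∑ k ∈ Finset.Ico N n, p k) ≤ P :=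
      Summable.sum_le_tsum _ (fun k _ => (hp k).1) hps
    have h4 : X n - X N - P ≤ ∑ k ∈ Finset.Ico N n, (x k - p k) := by
      rw [h1, h2]; linarith
    nlinarith
  have htop : Tendsto (fun n => capital p M x N + ε * (X n - X N - P)) atTop atTop := by
    apply tendsto_atTop_add_const_left
    apply Tendsto.const_mul_atTop hεpos
    have : (fun n => X n - X N - P) = fun n => X n + (-(X N) - P) := by
      funext n; ring
    rw [this]
    exact tendsto_atTop_add_const_right _ _ hXtop
  have hev : ∀ᶠ n in atTop, C < capital p M x n := by
    filter_upwards [htop.eventually_gt_atTop C, eventually_ge_atTop N] with n h1 h2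
    exact lt_of_lt_of_le h1 (hlow n h2)
  exact hev.frequently
end

section
/- Let (p_k) be a sequence in [0,1] and c_n the natural number with c_n - 1 ≤ ∑_{k=1}^n p_k < c_n. Then ∑_{k=1}^∞ 2^{-c_k - 1} p_k ≤ 1. -/
open Finset

lemma two_rpow_lb {q : ℝ} (hq0 : 0 ≤ q) : 1 + q / 2 ≤ (2:ℝ) ^ q := by
  have h1 : (2:ℝ) ^ q = Real.exp (q * Real.log 2) := by
    rw [Real.rpow_def_of_pos (by norm_num), mul_comm]
  have h2 : 1 + q * Real.log 2 ≤ Real.exp (q * Real.log 2) := by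
    have := Real.add_one_le_exp (q * Real.log 2); linarith
  have h3 : q / 2 ≤ q * Real.log 2 := by
    have hl : (0.6931471803 : ℝ) < Real.log 2 := Real.log_two_gt_d9
    nlinarith
  linarith [h1 ▸ h2]

lemma key_ineq (s q C : ℝ) (hq0 : 0 ≤ q) (hC : s + q < C) :
    (2:ℝ) ^ (-C - 1) * q ≤ (2:ℝ) ^ (-s) - (2:ℝ) ^ (-(s + q)) := by
  have hpos : (0:ℝ) < (2:ℝ) ^ (-(s + q)) := Real.rpow_pos_of_pos (by norm_num) _
  have h1 : (2:ℝ) ^ (-C - 1) ≤ (2:ℝ) ^ (-(s + q) - 1) :=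
    Real.rpow_le_rpow_of_exponent_le (by norm_num) (by linarith)
  have h2 : (2:ℝ) ^ (-(s + q) - 1) = (2:ℝ) ^ (-(s + q)) / 2 := by
    rw [Real.rpow_sub (by norm_num), Real.rpow_one]
  have h3 : (2:ℝ) ^ (-s) = (2:ℝ) ^ (-(s + q)) * (2:ℝ) ^ q := by
    rw [← Real.rpow_add (by norm_num)]; ring_nf
  have h4 : 1 + q / 2 ≤ (2:ℝ) ^ q := two_rpow_lb hq0
  calc (2:ℝ) ^ (-C - 1) * q ≤ (2:ℝ) ^ (-(s + q)) / 2 * q := by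
        rw [← h2]; exact mul_le_mul_of_nonneg_right h1 hq0
    _ ≤ (2:ℝ) ^ (-s) - (2:ℝ) ^ (-(s + q)) := by rw [h3]; nlinarith

/-- If `c n` is the natural number with `c n - 1 ≤ ∑_{k ≤ n} p k < c n`, then
`∑_k 2^{-c k - 1} p k ≤ 1`. -/
theorem stmt_5 (p : ℕ → ℝ)
    (hp : ∀ n, p n ∈ Set.Icc (0 : ℝ) 1)
    (c : ℕ → ℕ)
    (hc : ∀ n, (c n : ℝ) - 1 ≤ ∑ k ∈ Finset.range (n + 1), p k ∧
      ∑ k ∈ Finset.range (n + 1), p k < c n) :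
    (∑' k : ℕ, (2 : ℝ) ^ (-(c k : ℤ) - 1) * p k) ≤ 1 := by
  set S : ℕ → ℝ := fun n => ∑ k ∈ Finset.range n, p k with hS
  have key : ∀ k, (2:ℝ) ^ (-(c k : ℤ) - 1) * p k
      ≤ (2:ℝ) ^ (-(S k)) - (2:ℝ) ^ (-(S (k + 1))) := by
    intro k
    have hSucc : S (k + 1) = S k + p k := Finset.sum_range_succ p k
    have hlt : S k + p k < (c k : ℝ) := hSucc ▸ (hc k).2
    have hz : (2:ℝ) ^ (-(c k : ℤ) - 1) = (2:ℝ) ^ (-(c k : ℝ) - 1) := by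
      rw [show (-(c k : ℝ) - 1 : ℝ) = ((-(c k : ℤ) - 1 : ℤ) : ℝ) by push_cast; ring,
        Real.rpow_intCast]
    rw [hz, hSucc]
    exact key_ineq (S k) (p k) (c k) (hp k).1 hlt
  have hbound : ∀ n, ∑ k ∈ Finset.range n, (2:ℝ) ^ (-(c k : ℤ) - 1) * p k ≤ 1 := by
    intro n
    calc ∑ k ∈ Finset.range n, (2:ℝ) ^ (-(c k : ℤ) - 1) * p k
        ≤ ∑ k ∈ Finset.range n, ((2:ℝ) ^ (-(S k)) - (2:ℝ) ^ (-(S (k + 1)))) :=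
          Finset.sum_le_sum fun k _ => key k
      _ = (2:ℝ) ^ (-(S 0)) - (2:ℝ) ^ (-(S n)) :=
          Finset.sum_range_sub' (fun k => (2:ℝ) ^ (-(S k))) n
      _ ≤ 1 := by
          have h0 : S 0 = 0 := by simp [hS]
          have hpos : (0:ℝ) ≤ (2:ℝ) ^ (-(S n)) :=
            (Real.rpow_pos_of_pos (by norm_num) _).le
          rw [h0]; simp; linarith
  exact Real.tsum_le_of_sum_range_le
    (fun k => mul_nonneg (zpow_nonneg (by norm_num) _) (hp k).1) hbound
end

section
/- In the coin-tossing game, Reality can strongly comply with the event: ∑_n p_n < ∞ if and only if ∑_n x_n < ∞. That is, there is a strategy of Reality such that (1) on every play in which Skeptic keeps his capital nonnegative, the event holds, and (2) the capital never exceeds the initial capital K_0 = 1. -/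
open Filter Finset

noncomputable def rmove (pn Mn K S : ℝ) (o : ℕ) : ℝ :=
  if (o : ℝ) + 1 ≤ S then (if Mn * (1 - pn) ≤ (1 - K) / 2 then 1 else 0)
  else (if -(Mn * pn) ≤ (1 - K) * pn then 0 else 1)

noncomputable def rstate (p M : ℕ → ℝ) : ℕ → ℝ × ℝ × ℕ
  | 0 => (1, 0, 0)
  | n + 1 =>
    let st := rstate p M n
    let x := rmove (p n) (M n) st.1 st.2.1 st.2.2
    (st.1 + M n * (x - p n), st.2.1 + p n, st.2.2 + (if x = 1 then 1 else 0))

noncomputable def rstrat (p M : ℕ → ℝ) (n : ℕ) : ℝ :=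
  rmove (p n) (M n) (rstate p M n).1 (rstate p M n).2.1 (rstate p M n).2.2

variable (p M : ℕ → ℝ)

noncomputable def rK (n : ℕ) : ℝ := (rstate p M n).1
noncomputable def rS (n : ℕ) : ℝ := (rstate p M n).2.1
noncomputable def rO (n : ℕ) : ℕ := (rstate p M n).2.2

lemma rK_zero : rK p M 0 = 1 := rfl
lemma rK_succ (n : ℕ) : rK p M (n+1) = rK p M n + M n * (rstrat p M n - p n) := rfl
lemma rS_zero : rS p M 0 = 0 := rfl
lemma rS_succ (n : ℕ) : rS p M (n+1) = rS p M n + p n := rfl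
lemma rO_succ (n : ℕ) : rO p M (n+1) = rO p M n + (if rstrat p M n = 1 then 1 else 0) := rfl

lemma x01 (n : ℕ) : rstrat p M n = 0 ∨ rstrat p M n = 1 := by
  unfold rstrat rmove
  split_ifs <;> simp

/-- Master case analysis for one step of Reality's strategy. -/
lemma master (hp : ∀ n, p n ∈ Set.Icc (0:ℝ) 1) (n : ℕ) (hs : 0 ≤ 1 - rK p M n) :
    (rstrat p M n = 1 ∧ ((rO p M n : ℝ) + 1 ≤ rS p M n) ∧
      M n * (rstrat p M n - p n) ≤ (1 - rK p M n) / 2) ∨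
    (rstrat p M n = 0 ∧ ¬((rO p M n : ℝ) + 1 ≤ rS p M n) ∧
      M n * (rstrat p M n - p n) ≤ (1 - rK p M n) * p n) ∨
    (rstrat p M n = 0 ∧ ((rO p M n : ℝ) + 1 ≤ rS p M n) ∧ p n < 1 ∧
      (1 - rK p M n) / 2 < M n * (1 - p n) ∧
      M n * (rstrat p M n - p n) = -(M n * p n)) ∨
    (rstrat p M n = 1 ∧ ¬((rO p M n : ℝ) + 1 ≤ rS p M n) ∧ 0 < p n ∧
      (1 - rK p M n) < -M n ∧
      M n * (rstrat p M n - p n) = M n * (1 - p n)) := by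
  obtain ⟨hp0, hp1⟩ := hp n
  have hx : rstrat p M n = rmove (p n) (M n) (rK p M n) (rS p M n) (rO p M n) := rfl
  rw [hx]
  unfold rmove
  split_ifs with hw h1 h2
  · exact Or.inl ⟨rfl, hw, h1⟩
  · right; right; left
    push_neg at h1
    refine ⟨rfl, hw, ?_, h1, by ring⟩
    by_contra hpn
    have : p n = 1 := le_antisymm hp1 (not_lt.1 hpn)
    rw [this] at h1
    simp at h1
    linarith
  · right; left
    refine ⟨rfl, hw, ?_⟩
    have : M n * (0 - p n) = -(M n * p n) := by ring
    rw [this]; exact h2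
  · right; right; right
    push_neg at h2
    have hpn : 0 < p n := by
      rcases lt_or_eq_of_le hp0 with h | h
      · exact h
      · exfalso; rw [← h] at h2; simp at h2
    refine ⟨rfl, hw, hpn, ?_, rfl⟩
    nlinarith

lemma s_nonneg (hp : ∀ n, p n ∈ Set.Icc (0:ℝ) 1) : ∀ n, 0 ≤ 1 - rK p M n := by
  intro n
  induction n with
  | zero => rw [rK_zero]; norm_num
  | succ n ih =>
    obtain ⟨hp0, hp1⟩ := hp n
    have hd : M n * (rstrat p M n - p n) ≤ 1 - rK p M n := by
      rcases master p M hp n ih with ⟨_, _, h⟩ | ⟨_, _, h⟩ | ⟨_, _, hp1', hM, hd⟩ | ⟨_, _, hpn, hM, hd⟩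
      · linarith
      · nlinarith
      · have hM0 : 0 < M n := by nlinarith
        rw [hd]; nlinarith
      · rw [hd]; nlinarith
    rw [rK_succ]; linarith

lemma capital_eq : ∀ n, capital p M (rstrat p M) n = rK p M n := by
  intro n
  induction n with
  | zero => rfl
  | succ n ih => rw [capital, ih]; rfl

lemma rK_sum (a : ℕ) : ∀ n, a ≤ n →
    rK p M n = rK p M a + ∑ k ∈ Ico a n, M k * (rstrat p M k - p k) := by
  intro n
  induction n with
  | zero => intro h; simp [Nat.le_zero.1 h]
  | succ n ih =>
    intro h
    rcases Nat.lt_or_ge a (n+1) with h' | h'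
    · have ha : a ≤ n := Nat.lt_succ_iff.1 h'
      rw [rK_succ, ih ha, Finset.sum_Ico_succ_top ha]; ring
    · have : a = n + 1 := le_antisymm h h'
      simp [this]

lemma rS_eq (n : ℕ) : rS p M n = ∑ k ∈ range n, p k := by
  induction n with
  | zero => simp [rS_zero]
  | succ n ih => rw [rS_succ, ih, Finset.sum_range_succ]

lemma rO_mono : Monotone (rO p M) := by
  apply monotone_nat_of_le_succ
  intro n
  rw [rO_succ]
  exact Nat.le_add_right _ _

lemma rO_const (N : ℕ) (h : ∀ n ≥ N, rstrat p M n = 0) : ∀ n ≥ N, rO p M n = rO p M N := by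
  intro n hn
  induction n with
  | zero => simp_all
  | succ n ih =>
    rcases Nat.lt_or_ge N (n+1) with h' | h'
    · have ha : N ≤ n := Nat.lt_succ_iff.1 h'
      rw [rO_succ, ih ha, h n ha]
      norm_num
    · exact le_antisymm h' hn ▸ rfl

lemma rO_unbounded (h : ∀ N, ∃ n ≥ N, rstrat p M n = 1) : ∀ C : ℕ, ∃ N, C ≤ rO p M N := by
  intro C
  induction C with
  | zero => exact ⟨0, Nat.zero_le _⟩
  | succ C ih =>
    obtain ⟨N, hN⟩ := ih
    obtain ⟨n, hn, hx⟩ := h N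
    refine ⟨n + 1, ?_⟩
    rw [rO_succ, if_pos hx]
    have := rO_mono p M hn
    omega

lemma summable_x_of_ev_zero {x : ℕ → ℝ} (N : ℕ) (h : ∀ n ≥ N, x n = 0) : Summable x := by
  apply (summable_nat_add_iff N).mp
  have : (fun n => x (n + N)) = fun _ => (0:ℝ) := by
    funext n; exact h (n + N) (Nat.le_add_left _ _)
  rw [this]
  exact summable_zero

lemma ev_zero_of_summable_x {x : ℕ → ℝ} (h01 : ∀ n, x n = 0 ∨ x n = 1) (h : Summable x) :
    ∃ N, ∀ n ≥ N, x n = 0 := by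
  have := h.tendsto_atTop_zero
  have hev : ∀ᶠ n in atTop, x n < 1 := this.eventually (gt_mem_nhds one_pos)
  obtain ⟨N, hN⟩ := eventually_atTop.1 hev
  exact ⟨N, fun n hn => (h01 n).resolve_right (fun h1 => absurd (h1 ▸ hN n hn) (lt_irrefl 1))⟩

/-- Claim B: Skeptic keeps capital nonnegative and Reality's moves are summable
implies p is summable. -/
lemma claimB (hp : ∀ n, p n ∈ Set.Icc (0:ℝ) 1) (hK : ∀ n, 0 ≤ rK p M n)
    (hx : Summable (rstrat p M)) : Summable p := by
  by_contra hnp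
  have hp0 : ∀ n, 0 ≤ p n := fun n => (hp n).1
  have hS : Tendsto (fun n => ∑ k ∈ range n, p k) atTop atTop :=
    (not_summable_iff_tendsto_nat_atTop_of_nonneg hp0).1 hnp
  obtain ⟨N₁, hN₁⟩ := ev_zero_of_summable_x (x01 p M) hx
  -- eventually w n holds
  have hSS : Tendsto (rS p M) atTop atTop := by
    have : rS p M = fun n => ∑ k ∈ range n, p k := funext (rS_eq p M)
    rw [this]; exact hS
  obtain ⟨N₂', hN₂'⟩ := eventually_atTop.1 (hSS.eventually_ge_atTop ((rO p M N₁ : ℝ) + 1))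
  set N₂ := max N₁ N₂' with hN₂def
  have hw : ∀ n ≥ N₂, (rO p M n : ℝ) + 1 ≤ rS p M n := by
    intro n hn
    have h1 : N₁ ≤ n := le_trans (le_max_left _ _) hn
    have := rO_const p M N₁ hN₁ n h1
    rw [this]
    exact hN₂' n (le_trans (le_max_right _ _) hn)
  -- for n ≥ N₂: case 3 of master
  have hcase : ∀ n ≥ N₂, p n < 1 ∧ (1 - rK p M n) / 2 < M n * (1 - p n) ∧
      M n * (rstrat p M n - p n) = -(M n * p n) := by
    intro n hn
    rcases master p M hp n (s_nonneg p M hp n) with ⟨h1, _⟩ | ⟨_, h2, _⟩ | ⟨_, _, h⟩ | ⟨h1, _⟩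
    · exact absurd h1 (by rw [hN₁ n (le_trans (le_max_left _ _) hn)]; norm_num)
    · exact absurd (hw n hn) h2
    · exact h
    · exact absurd h1 (by rw [hN₁ n (le_trans (le_max_left _ _) hn)]; norm_num)
  have hM_pos : ∀ n ≥ N₂, 0 < M n := by
    intro n hn
    obtain ⟨hlt, hM, _⟩ := hcase n hn
    nlinarith [s_nonneg p M hp n]
  -- find m ≥ N₂ with p m > 0
  have hm : ∃ m ≥ N₂, 0 < p m := by
    by_contra hc
    push_neg at hc
    exact hnp (summable_x_of_ev_zero N₂ (fun n hn => le_antisymm (hc n hn) (hp0 n)))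
  obtain ⟨m, hmN, hpm⟩ := hm
  -- slack strictly positive at m+1
  have hδ : 0 < 1 - rK p M (m+1) := by
    obtain ⟨hlt, hM, hd⟩ := hcase m hmN
    have := s_nonneg p M hp m
    rw [rK_succ, hd]
    have := hM_pos m hmN
    nlinarith
  set δ := 1 - rK p M (m+1) with hδdef
  -- slack grows
  have hgrow : ∀ n ≥ m+1, δ + (δ/2) * ∑ k ∈ Ico (m+1) n, p k ≤ 1 - rK p M n := by
    intro n hn
    induction n with
    | zero => omega
    | succ n ih =>
      rcases Nat.lt_or_ge (m+1) (n+1) with h' | h'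
      · have ha : m+1 ≤ n := Nat.lt_succ_iff.1 h'
        have ihn := ih ha
        have hsum0 : 0 ≤ ∑ k ∈ Ico (m+1) n, p k := Finset.sum_nonneg (fun k _ => hp0 k)
        have hsn : δ ≤ 1 - rK p M n := by nlinarith
        have hnN₂ : N₂ ≤ n := le_trans hmN (le_trans (Nat.le_succ m) ha)
        obtain ⟨hlt, hM, hd⟩ := hcase n hnN₂
        have hMp : 0 < M n := hM_pos n hnN₂
        have hstep : (1 - rK p M n) + ((1 - rK p M n)/2) * p n ≤ 1 - rK p M (n+1) := by
          rw [rK_succ, hd]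
          have hMn : (1 - rK p M n) / 2 < M n := by nlinarith [(hp n).1]
          nlinarith [(hp n).1]
        rw [Finset.sum_Ico_succ_top ha]
        have : (δ/2) * p n ≤ ((1 - rK p M n)/2) * p n := by nlinarith [(hp n).1]
        nlinarith
      · have : m + 1 = n + 1 := le_antisymm hn h'
        rw [← this]
        simp [hδdef]
  -- contradiction: slack exceeds 1
  have htail : Tendsto (fun n => ∑ k ∈ Ico (m+1) n, p k) atTop atTop := by
    have heq : ∀ n, ∑ k ∈ Ico (m+1) (n + (m+1)), p k =
        (∑ k ∈ range (n + (m+1)), p k) - ∑ k ∈ range (m+1), p k := by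
      intro n
      rw [Finset.sum_Ico_eq_sub _ (Nat.le_add_left _ _)]
    apply tendsto_atTop_atTop.2
    intro b
    obtain ⟨N, hN⟩ := tendsto_atTop_atTop.1 hS (b + ∑ k ∈ range (m+1), p k)
    refine ⟨N + (m+1), fun n hn => ?_⟩
    have h1 : m + 1 ≤ n := le_trans (Nat.le_add_left _ _) hn
    rw [Finset.sum_Ico_eq_sub _ h1]
    have := hN n (le_trans (Nat.le_add_right _ _) hn)
    linarith
  obtain ⟨n, hn1, hn2⟩ : ∃ n, m + 1 ≤ n ∧ 2/δ ≤ ∑ k ∈ Ico (m+1) n, p k := by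
    obtain ⟨N, hN⟩ := tendsto_atTop_atTop.1 htail (2/δ)
    exact ⟨max N (m+1), le_max_right _ _, hN _ (le_max_left _ _)⟩
  have := hgrow n hn1
  have hK' := hK n
  have : δ + (δ/2) * (2/δ) ≤ 1 - rK p M n := by
    have h2 : 0 < δ/2 := by linarith
    nlinarith
  have hone : δ / 2 * (2 / δ) = 1 := by
    field_simp
  rw [hone] at this
  linarith

/-- Claim A: p summable implies Reality's moves are summable. -/
lemma claimA (hp : ∀ n, p n ∈ Set.Icc (0:ℝ) 1) (hK : ∀ n, 0 ≤ rK p M n)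
    (hSp : Summable p) : Summable (rstrat p M) := by
  by_contra hnx
  have hp0 : ∀ n, 0 ≤ p n := fun n => (hp n).1
  -- infinitely many ones
  have hio : ∀ N, ∃ n ≥ N, rstrat p M n = 1 := by
    intro N
    by_contra hc
    push_neg at hc
    exact hnx (summable_x_of_ev_zero N (fun n hn => (x01 p M n).resolve_right (hc n hn)))
  -- partial sums bounded by B
  set B := ∑' k, p k with hBdef
  have hSB : ∀ n, rS p M n ≤ B := by
    intro n
    rw [rS_eq]
    exact Summable.sum_le_tsum (range n) (fun k _ => hp0 k) hSp
  -- N₁ : beyond it, w is false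
  obtain ⟨N₁, hN₁⟩ := rO_unbounded p M hio (Nat.ceil B)
  have hnw : ∀ n ≥ N₁, ¬((rO p M n : ℝ) + 1 ≤ rS p M n) := by
    intro n hn hwn
    have h1 : (Nat.ceil B : ℝ) ≤ (rO p M n : ℝ) := by
      exact_mod_cast le_trans hN₁ (rO_mono p M hn)
    have h2 : B ≤ (Nat.ceil B : ℝ) := Nat.le_ceil B
    have := hSB n
    linarith
  -- N₂ : beyond it, p small and tail sums ≤ 1/4
  have htails : Tendsto (fun i => ∑' k, p (k + i)) atTop (nhds 0) := tendsto_sum_nat_add p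
  obtain ⟨N₂', hN₂'⟩ := eventually_atTop.1 (htails.eventually (gt_mem_nhds (by norm_num : (0:ℝ) < 1/4)))
  obtain ⟨N₂'', hN₂''⟩ := eventually_atTop.1 (hSp.tendsto_atTop_zero.eventually
    (gt_mem_nhds (by norm_num : (0:ℝ) < 1/2)))
  set N₂ := max N₁ (max N₂' N₂'') with hN₂def
  have hN₂1 : N₁ ≤ N₂ := le_max_left _ _
  have hpsmall : ∀ k ≥ N₂, p k ≤ 1/2 := fun k hk =>
    le_of_lt (hN₂'' k (le_trans (le_trans (le_max_right _ _) (le_max_right _ _)) hk))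
  have htail : ∀ a n, N₂ ≤ a → ∑ k ∈ Ico a n, p k ≤ 1/4 := by
    intro a n ha
    have hsum : Summable (fun j => p (j + N₂)) := (summable_nat_add_iff N₂).mpr hSp
    have h1 : ∑ k ∈ Ico a n, p k ≤ ∑ k ∈ Ico N₂ (max n N₂), p k := by
      apply Finset.sum_le_sum_of_subset_of_nonneg
      · apply Finset.Ico_subset_Ico ha (le_max_left _ _)
      · intro k _ _; exact hp0 k
    have h2 : ∑ k ∈ Ico N₂ (max n N₂), p k ≤ ∑' j, p (j + N₂) := by
      rw [Finset.sum_Ico_eq_sum_range]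
      have : ∀ i, p (N₂ + i) = p (i + N₂) := fun i => by rw [Nat.add_comm]
      rw [Finset.sum_congr rfl (fun i _ => this i)]
      exact Summable.sum_le_tsum _ (fun k _ => hp0 _) hsum
    have h3 : ∑' k, p (k + N₂) < 1/4 :=
      hN₂' N₂ (le_trans (le_max_left _ _) (le_max_right _ _))
    linarith
  -- first one beyond N₂
  obtain ⟨m, hmN₂, hxm⟩ := hio N₂
  have hmN₁ : N₁ ≤ m := le_trans hN₂1 hmN₂
  -- only cases 2 and 4 beyond N₁
  have hcase : ∀ n, N₁ ≤ n →
      (rstrat p M n = 0 ∧ M n * (rstrat p M n - p n) ≤ (1 - rK p M n) * p n) ∨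
      (rstrat p M n = 1 ∧ (1 - rK p M n) < -M n ∧
        M n * (rstrat p M n - p n) = M n * (1 - p n)) := by
    intro n hn
    rcases master p M hp n (s_nonneg p M hp n) with ⟨_, hw, _⟩ | ⟨h0, _, h⟩ | ⟨_, hw, _⟩ | ⟨h1, _, _, hM, hd⟩
    · exact absurd hw (hnw n hn)
    · exact Or.inl ⟨h0, h⟩
    · exact absurd hw (hnw n hn)
    · exact Or.inr ⟨h1, hM, hd⟩
  -- δ > 0
  have hδ : 0 < 1 - rK p M (m+1) := by
    rcases hcase m hmN₁ with ⟨h0, _⟩ | ⟨_, hM, hd⟩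
    · rw [hxm] at h0; norm_num at h0
    · have hs := s_nonneg p M hp m
      have hpm : p m ≤ 1/2 := hpsmall m hmN₂
      rw [rK_succ, hd]
      nlinarith
  set δ := 1 - rK p M (m+1) with hδdef
  -- slack stays above δ/2
  have hgrow : ∀ n, m+1 ≤ n → δ * (1 - 2 * ∑ k ∈ Ico (m+1) n, p k) ≤ 1 - rK p M n := by
    intro n hn
    induction n with
    | zero => omega
    | succ n ih =>
      rcases Nat.lt_or_ge (m+1) (n+1) with h' | h'
      · have ha : m+1 ≤ n := Nat.lt_succ_iff.1 h'
        have ihn := ih ha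
        have hs := s_nonneg p M hp n
        have hs1 : 1 - rK p M n ≤ 1 := by have := hK n; linarith
        have hsum4 : ∑ k ∈ Ico (m+1) n, p k ≤ 1/4 := htail _ _ (le_trans hmN₂ (Nat.le_succ m))
        have hsum0 : 0 ≤ ∑ k ∈ Ico (m+1) n, p k := Finset.sum_nonneg (fun k _ => hp0 k)
        have hpn0 := hp0 n
        have hpn1 := hpsmall n (le_trans hmN₂ (le_trans (Nat.le_succ m) ha))
        rw [Finset.sum_Ico_succ_top ha]
        have hstep : rK p M (n+1) = rK p M n + M n * (rstrat p M n - p n) := rK_succ p M n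
        rcases hcase n (le_trans hmN₁ (le_trans (Nat.le_succ m) ha)) with ⟨_, hd⟩ | ⟨_, hM, hd⟩
        · -- d ≤ s p
          have h1 : δ * (1 - 2 * ∑ k ∈ Ico (m+1) n, p k) * (1 - p n) ≤
              (1 - rK p M n) * (1 - p n) :=
            mul_le_mul_of_nonneg_right ihn (by linarith)
          have h2 : 0 ≤ δ * p n * (1 + 2 * ∑ k ∈ Ico (m+1) n, p k) := by positivity
          nlinarith [h1, h2, hd, hstep]
        · -- d ≤ 0
          have hd0 : M n * (rstrat p M n - p n) ≤ 0 := by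
            rw [hd]; nlinarith
          nlinarith
      · have : m + 1 = n + 1 := le_antisymm hn h'
        rw [← this]
        simp [hδdef]
  have hslack : ∀ n, m+1 ≤ n → δ/2 ≤ 1 - rK p M n := by
    intro n hn
    have h1 := hgrow n hn
    have hsum4 : ∑ k ∈ Ico (m+1) n, p k ≤ 1/4 := htail _ _ (le_trans hmN₂ (Nat.le_succ m))
    nlinarith
  -- per-step bound beyond m+1
  have hd_bound : ∀ n, m+1 ≤ n → M n * (rstrat p M n - p n) ≤
      p n - (δ/4) * (if rstrat p M n = 1 then 1 else 0) := by
    intro n hn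
    have hs := s_nonneg p M hp n
    have hs1 : 1 - rK p M n ≤ 1 := by have := hK n; linarith
    have hpn0 := hp0 n
    have hpn1 := hpsmall n (le_trans hmN₂ (le_trans (Nat.le_succ m) hn))
    have hsl := hslack n hn
    rcases hcase n (le_trans hmN₁ (le_trans (Nat.le_succ m) hn)) with ⟨h0, hd⟩ | ⟨h1, hM, hd⟩
    · rw [if_neg (by rw [h0]; norm_num)]
      nlinarith
    · rw [if_pos h1, hd]
      nlinarith
  -- ones count
  have hones : ∀ n, m+1 ≤ n → (rO p M n : ℝ) =
      (rO p M (m+1) : ℝ) + ∑ k ∈ Ico (m+1) n, (if rstrat p M k = 1 then (1:ℝ) else 0) := by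
    intro n hn
    induction n with
    | zero => omega
    | succ n ih =>
      rcases Nat.lt_or_ge (m+1) (n+1) with h' | h'
      · have ha : m+1 ≤ n := Nat.lt_succ_iff.1 h'
        rw [Finset.sum_Ico_succ_top ha, ← add_assoc, ← ih ha, rO_succ]
        push_cast
        split_ifs <;> norm_num
      · have : m + 1 = n + 1 := le_antisymm hn h'
        rw [← this]
        simp
  -- choose n with many ones
  obtain ⟨N₃, hN₃⟩ := rO_unbounded p M hio (rO p M (m+1) + (Nat.ceil (5/δ) + 1))
  set n := max N₃ (m+1) with hndef
  have hn1 : m+1 ≤ n := le_max_right _ _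
  have hcount : (rO p M (m+1) : ℝ) + (5/δ + 1) ≤ (rO p M n : ℝ) := by
    have h1 : rO p M (m+1) + (Nat.ceil (5/δ) + 1) ≤ rO p M n :=
      le_trans hN₃ (rO_mono p M (le_max_left _ _))
    have h2 : (5/δ : ℝ) ≤ (Nat.ceil (5/δ) : ℝ) := Nat.le_ceil _
    have := (Nat.cast_le (α := ℝ)).2 h1
    push_cast at this
    linarith
  -- sum the per-step bounds
  have hKn : rK p M n = rK p M (m+1) + ∑ k ∈ Ico (m+1) n, M k * (rstrat p M k - p k) :=
    rK_sum p M (m+1) n hn1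
  have hsum_le : ∑ k ∈ Ico (m+1) n, M k * (rstrat p M k - p k) ≤
      ∑ k ∈ Ico (m+1) n, (p k - (δ/4) * (if rstrat p M k = 1 then 1 else 0)) := by
    apply Finset.sum_le_sum
    intro k hk
    exact hd_bound k (Finset.mem_Ico.1 hk).1
  rw [Finset.sum_sub_distrib] at hsum_le
  have hp4 : ∑ k ∈ Ico (m+1) n, p k ≤ 1/4 := htail _ _ (le_trans hmN₂ (Nat.le_succ m))
  have hcnt : 5/δ + 1 ≤ ∑ k ∈ Ico (m+1) n, (if rstrat p M k = 1 then (1:ℝ) else 0) := by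
    have := hones n hn1
    linarith [hcount]
  have hmul : ∑ k ∈ Ico (m+1) n, (δ/4) * (if rstrat p M k = 1 then (1:ℝ) else 0) =
      (δ/4) * ∑ k ∈ Ico (m+1) n, (if rstrat p M k = 1 then (1:ℝ) else 0) :=
    (Finset.mul_sum _ _ _).symm
  have hK1 : rK p M (m+1) ≤ 1 := by have := s_nonneg p M hp (m+1); linarith
  have hfinal : rK p M n ≤ 1 + 1/4 - (δ/4) * (5/δ + 1) := by
    rw [hKn]
    have h5 : (δ/4) * (5/δ + 1) ≤ (δ/4) * ∑ k ∈ Ico (m+1) n, (if rstrat p M k = 1 then (1:ℝ) else 0) := by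
      apply mul_le_mul_of_nonneg_left hcnt
      linarith
    linarith [hsum_le, hmul ▸ h5]
  have : (δ/4) * (5/δ + 1) = 5/4 + δ/4 := by
    field_simp
  rw [this] at hfinal
  have := hK n
  linarith

lemma rstate_congr (p p' M M' : ℕ → ℝ) : ∀ n, (∀ k < n, p k = p' k) → (∀ k < n, M k = M' k) →
    rstate p M n = rstate p' M' n := by
  intro n
  induction n with
  | zero => intros; rfl
  | succ n ih =>
    intro hp hM
    have h1 : rstate p M n = rstate p' M' n :=
      ih (fun k hk => hp k (Nat.lt_succ_of_lt hk)) (fun k hk => hM k (Nat.lt_succ_of_lt hk))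
    show (let st := rstate p M n
      let x := rmove (p n) (M n) st.1 st.2.1 st.2.2
      (st.1 + M n * (x - p n), st.2.1 + p n, st.2.2 + (if x = 1 then 1 else 0))) = _
    rw [h1, hp n (Nat.lt_succ_self n), hM n (Nat.lt_succ_self n)]
    rfl

lemma rstrat_congr (p p' M M' : ℕ → ℝ) (n : ℕ) (hp : ∀ k ≤ n, p k = p' k)
    (hM : ∀ k ≤ n, M k = M' k) : rstrat p M n = rstrat p' M' n := by
  unfold rstrat
  rw [rstate_congr p p' M M' n (fun k hk => hp k (le_of_lt hk)) (fun k hk => hM k (le_of_lt hk)),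
    hp n le_rfl, hM n le_rfl]

/-- In the coin-tossing game, Reality can strongly comply with the event
`∑ p n < ∞ ↔ ∑ x n < ∞`: there is a strategy `R` (adapted: Reality's move at
round `n` depends only on Forecaster's and Skeptic's moves up to round `n`)
producing 0-1 moves, such that whenever Skeptic keeps the capital nonnegative,
the event holds and the capital never exceeds the initial capital 1. -/
theorem stmt_6 :
    ∃ R : (ℕ → ℝ) → (ℕ → ℝ) → ℕ → ℝ,
      (∀ p p' M M' : ℕ → ℝ, ∀ n, (∀ k ≤ n, p k = p' k) → (∀ k ≤ n, M k = M' k) →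
        R p M n = R p' M' n) ∧
      ∀ p M : ℕ → ℝ, (∀ n, p n ∈ Set.Icc (0 : ℝ) 1) →
        (∀ n, R p M n = 0 ∨ R p M n = 1) ∧
        ((∀ n, 0 ≤ capital p M (R p M) n) →
          ((Summable p ↔ Summable (R p M)) ∧
            ∀ n, capital p M (R p M) n ≤ 1)) := by
  refine ⟨rstrat, rstrat_congr, fun p M hp => ⟨x01 p M, fun hK0 => ?_⟩⟩
  have hK : ∀ n, 0 ≤ rK p M n := fun n => (capital_eq p M n) ▸ hK0 n
  refine ⟨⟨claimA p M hp hK, claimB p M hp hK⟩, fun n => ?_⟩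
  rw [capital_eq p M n]
  have := s_nonneg p M hp n
  linarith
end

section
/- Let {a_n} be a sequence of positive reals. Then there exists a sequence {ε_n} of positive reals such that (i) ε_n depends only on a_1,…,a_n, (ii) ε_n a_n ≤ 1 for all n, (iii) if ∑_n a_n = ∞ then ∑_n ε_n a_n = ∞ and ε_n → 0, and (iv) if ∑_n a_n < ∞ then {ε_n} converges to a positive real. -/
open Filter

/-- For any sequence of positive reals `a` there is a sequence of positive
reals `ε` (depending only on the initial segments of `a`) with `ε n * a n ≤ 1`,
such that if `∑ a n = ∞` then `∑ ε n * a n = ∞` and `ε n → 0`, while if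
`∑ a n < ∞` then `ε n` converges to a positive real. -/
theorem stmt_8 :
    ∃ E : (ℕ → ℝ) → ℕ → ℝ,
      (∀ a a' : ℕ → ℝ, ∀ n, (∀ k ≤ n, a k = a' k) → E a n = E a' n) ∧
      ∀ a : ℕ → ℝ, (∀ n, 0 < a n) →
        (∀ n, 0 < E a n) ∧
        (∀ n, E a n * a n ≤ 1) ∧
        (¬ Summable a →
          ¬ Summable (fun n => E a n * a n) ∧ Tendsto (E a) atTop (nhds 0)) ∧
        (Summable a → ∃ L : ℝ, 0 < L ∧ Tendsto (E a) atTop (nhds L)) := by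
  set S : (ℕ → ℝ) → ℕ → ℝ := fun a n => 1 + ∑ k ∈ Finset.range (n + 1), |a k| with hS
  refine ⟨fun a n => (S a n)⁻¹, ?_, ?_⟩
  · intro a a' n h
    simp only [hS]
    congr 2
    exact Finset.sum_congr rfl fun k hk => by
      rw [h k (Nat.lt_succ_iff.mp (Finset.mem_range.mp hk))]
  · intro a ha
    have habs : ∀ k, |a k| = a k := fun k => abs_of_pos (ha k)
    have hSpos : ∀ n, 0 < S a n := by
      intro n
      have : 0 ≤ ∑ k ∈ Finset.range (n + 1), |a k| :=
        Finset.sum_nonneg fun k _ => abs_nonneg _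
      simp only [hS]; linarith
    have hEpos : ∀ n, 0 < (S a n)⁻¹ := fun n => inv_pos.mpr (hSpos n)
    have haleS : ∀ n, a n ≤ S a n := by
      intro n
      have h1 : a n ≤ ∑ k ∈ Finset.range (n + 1), |a k| := by
        rw [← habs n]
        exact Finset.single_le_sum (fun k _ => abs_nonneg (a k))
          (Finset.mem_range.mpr (Nat.lt_succ_self n))
      simp only [hS]; linarith
    have hmul : ∀ n, (S a n)⁻¹ * a n ≤ 1 := by
      intro n
      rw [inv_mul_le_iff₀ (hSpos n), mul_one]
      exact haleS n
    have hSeq : ∀ n, S a n = 1 + ∑ i ∈ Finset.range (n + 1), a i := by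
      intro n; simp only [hS, habs]
    have hstep : ∀ n, S a (n + 1) = S a n + a (n + 1) := by
      intro n
      rw [hSeq, hSeq, Finset.sum_range_succ]
      ring
    have hmono : Monotone (S a) :=
      monotone_nat_of_le_succ fun n => by rw [hstep n]; linarith [(ha (n + 1))]
    refine ⟨hEpos, hmul, ?_, ?_⟩
    · intro hdiv
      have hPtend : Tendsto (fun n => ∑ i ∈ Finset.range n, a i) atTop atTop :=
        (not_summable_iff_tendsto_nat_atTop_of_nonneg (fun i => (ha i).le)).mp hdiv
      have hStend : Tendsto (S a) atTop atTop := by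
        have h1 : Tendsto (fun n => ∑ i ∈ Finset.range (n + 1), a i) atTop atTop :=
          hPtend.comp (tendsto_add_atTop_nat 1)
        have h2 : S a = fun n => 1 + ∑ i ∈ Finset.range (n + 1), a i := funext hSeq
        rw [h2]
        exact tendsto_atTop_add_const_left atTop 1 h1
      constructor
      · -- not summable of ε * a : Abel–Dini
        intro hsumf
        set f : ℕ → ℝ := fun n => (S a n)⁻¹ * a n with hf
        set T : ℕ → ℝ := fun n => ∑ i ∈ Finset.range n, f i with hTdef
        set L : ℝ := ∑' n, f n with hL
        have hT : Tendsto T atTop (nhds L) := hsumf.hasSum.tendsto_sum_nat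
        -- for N ≤ n : 1 - S a N / S a n ≤ T (n+1) - T (N+1)
        have hlb : ∀ N n, N ≤ n → 1 - S a N / S a n ≤ T (n + 1) - T (N + 1) := by
          intro N n hNn
          have hico : ∑ k ∈ Finset.Ico (N + 1) (n + 1), f k = T (n + 1) - T (N + 1) :=
            Finset.sum_Ico_eq_sub f (Nat.succ_le_succ hNn)
          have h1 : ∑ k ∈ Finset.Ico (N + 1) (n + 1), a k / S a n ≤
              ∑ k ∈ Finset.Ico (N + 1) (n + 1), f k := by
            apply Finset.sum_le_sum
            intro k hk
            obtain ⟨_, hk2⟩ := Finset.mem_Ico.mp hk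
            have hkn : k ≤ n := Nat.lt_succ_iff.mp hk2
            have : a k / S a n ≤ a k / S a k :=
              div_le_div_of_nonneg_left (ha k).le (hSpos k) (hmono hkn)
            calc a k / S a n ≤ a k / S a k := this
              _ = (S a k)⁻¹ * a k := by rw [div_eq_mul_inv, mul_comm]
          have h2 : ∑ k ∈ Finset.Ico (N + 1) (n + 1), a k / S a n =
              (S a n - S a N) / S a n := by
            rw [← Finset.sum_div]
            congr 1
            rw [Finset.sum_Ico_eq_sub a (Nat.succ_le_succ hNn), hSeq, hSeq]
            ring
          have h3 : (S a n - S a N) / S a n = 1 - S a N / S a n := by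
            rw [sub_div, div_self (hSpos n).ne']
          rw [← hico, ← h3, ← h2]
          exact h1
        have hkey : ∀ N, (1 : ℝ) ≤ L - T (N + 1) := by
          intro N
          have hz : Tendsto (fun n => S a N / S a n) atTop (nhds 0) := by
            have := (tendsto_inv_atTop_zero.comp hStend).const_mul (S a N)
            simpa [div_eq_mul_inv] using this
          have hlim1 : Tendsto (fun n => 1 - S a N / S a n) atTop (nhds 1) := by
            simpa using tendsto_const_nhds.sub hz
          have hlim2 : Tendsto (fun n => T (n + 1) - T (N + 1)) atTop
              (nhds (L - T (N + 1))) :=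
            (hT.comp (tendsto_add_atTop_nat 1)).sub tendsto_const_nhds
          exact le_of_tendsto_of_tendsto hlim1 hlim2
            (eventually_atTop.mpr ⟨N, fun n hn => hlb N n hn⟩)
        have hTshift : Tendsto (fun N => T (N + 1)) atTop (nhds L) :=
          hT.comp (tendsto_add_atTop_nat 1)
        have : L ≤ L - 1 :=
          le_of_tendsto hTshift (Filter.Eventually.of_forall fun N => by
            have := hkey N; linarith)
        linarith
      · exact tendsto_inv_atTop_zero.comp hStend
    · intro hsum
      have hts : Tendsto (fun n => ∑ i ∈ Finset.range n, a i) atTop (nhds (∑' i, a i)) :=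
        hsum.hasSum.tendsto_sum_nat
      have htsum_pos : 0 < 1 + ∑' i, a i := by
        have : 0 ≤ ∑' i, a i := tsum_nonneg fun i => (ha i).le
        linarith
      refine ⟨(1 + ∑' i, a i)⁻¹, inv_pos.mpr htsum_pos, ?_⟩
      have hStend : Tendsto (S a) atTop (nhds (1 + ∑' i, a i)) := by
        have h2 : S a = fun n => 1 + ∑ i ∈ Finset.range (n + 1), a i := funext hSeq
        rw [h2]
        exact tendsto_const_nhds.add (hts.comp (tendsto_add_atTop_nat 1))
      exact hStend.inv₀ htsum_pos.ne'
end

section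
/- Suppose h : ℝ → ℝ satisfies: h(x) = h(|x|) ≥ 0, h(x)/x is monotone increasing for x > 0, h(x)/x² is monotone decreasing for x > 0; let h^{-1} denote its inverse on the positive reals. Let g be a positive increasing function, (A_n) an increasing positive sequence, and (ε_n) positive reals with ε_n → 0. Then h^{-1}(g(A_n)·ε_n^{-1}) / h^{-1}(g(A_n)) ≥ ε_n^{-1/2} for all sufficiently large n, and in particular this ratio tends to infinity. -/
open Filter

/-- Under assumptions (A0)-(A2) and `h 0 = 0`, with `hinv` the inverse of `h`
on the nonnegative reals, `g` positive increasing, `A n` positive nondecreasing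
and `ε n → 0` positive, we have
`hinv (g (A n) * (ε n)⁻¹) / hinv (g (A n)) ≥ (ε n)⁻¹ ^ (1/2)` for all
sufficiently large `n`; in particular the ratio tends to infinity. -/
theorem stmt_10 (h hinv : ℝ → ℝ)
    (hA0 : ∀ x : ℝ, h x = h |x| ∧ 0 ≤ h x)
    (hA1 : ∀ x y : ℝ, 0 < x → x ≤ y → h x / x ≤ h y / y)
    (hA2 : ∀ x y : ℝ, 0 < x → x ≤ y → h y / y ^ 2 ≤ h x / x ^ 2)
    (h0 : h 0 = 0)
    (hmono : StrictMonoOn h (Set.Ici (0 : ℝ)))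
    (hinv_left : ∀ x : ℝ, 0 ≤ x → hinv (h x) = x)
    (hinv_right : ∀ y : ℝ, 0 ≤ y → h (hinv y) = y)
    (g : ℝ → ℝ) (hgpos : ∀ x, 0 < g x) (hgmono : Monotone g)
    (A : ℕ → ℝ) (hApos : ∀ n, 0 < A n) (hAmono : Monotone A)
    (ε : ℕ → ℝ) (hεpos : ∀ n, 0 < ε n) (hε0 : Tendsto ε atTop (nhds 0)) :
    (∀ᶠ n in atTop,
      ((ε n)⁻¹) ^ ((1 : ℝ) / 2) ≤
        hinv (g (A n) * (ε n)⁻¹) / hinv (g (A n))) ∧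
    Tendsto (fun n => hinv (g (A n) * (ε n)⁻¹) / hinv (g (A n)))
      atTop atTop := by
  have hinv_nonneg : ∀ y : ℝ, 0 ≤ y → 0 ≤ hinv y := by
    intro y hy
    have h1 : h |hinv y| = y := by rw [← (hA0 (hinv y)).1, hinv_right y hy]
    have h2 := hinv_left |hinv y| (abs_nonneg _)
    rw [h1] at h2
    rw [h2]; exact abs_nonneg _
  have hinv_pos : ∀ y : ℝ, 0 < y → 0 < hinv y := by
    intro y hy
    rcases lt_or_eq_of_le (hinv_nonneg y hy.le) with h' | h'
    · exact h'
    · exfalso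
      have h2 := hinv_right y hy.le
      rw [← h', h0] at h2
      exact hy.ne h2
  have key : ∀ᶠ n in atTop, ((ε n)⁻¹) ^ ((1 : ℝ) / 2) ≤
      hinv (g (A n) * (ε n)⁻¹) / hinv (g (A n)) := by
    filter_upwards [hε0.eventually_lt_const one_pos] with n hn
    set y := g (A n) with hy
    set c := (ε n)⁻¹ with hc
    have hypos : 0 < y := hgpos _
    have hc1 : 1 ≤ c := by
      rw [hc]
      exact (one_le_inv₀ (hεpos n)).mpr hn.le
    have hyc : y ≤ y * c := le_mul_of_one_le_right hypos.le hc1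
    set a := hinv y with ha
    set b := hinv (y * c) with hb
    have hapos : 0 < a := hinv_pos y hypos
    have hbpos : 0 < b := hinv_pos _ (lt_of_lt_of_le hypos hyc)
    have hha : h a = y := hinv_right y hypos.le
    have hhb : h b = y * c := hinv_right _ (le_trans hypos.le hyc)
    have hab : a ≤ b := by
      by_contra hlt
      push_neg at hlt
      have := hmono (Set.mem_Ici.mpr hbpos.le) (Set.mem_Ici.mpr hapos.le) hlt
      rw [hha, hhb] at this
      exact absurd this (not_lt.mpr hyc)
    have h2 := hA2 a b hapos hab
    rw [hha, hhb] at h2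
    -- y * c / b^2 ≤ y / a^2  ⇒  c ≤ (b/a)^2
    have hc_le : c ≤ (b / a) ^ 2 := by
      rw [div_le_div_iff₀ (by positivity) (by positivity)] at h2
      rw [div_pow, le_div_iff₀ (by positivity)]
      nlinarith [hypos, sq_nonneg a, sq_nonneg b]
    have hcnn : 0 ≤ c := le_trans zero_le_one hc1
    calc c ^ ((1:ℝ)/2) = Real.sqrt c := (Real.sqrt_eq_rpow c).symm
      _ ≤ b / a := by
          rw [show (b / a) = Real.sqrt ((b / a) ^ 2) from (Real.sqrt_sq (by positivity)).symm]
          exact Real.sqrt_le_sqrt hc_le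
    -- fallback in case calc's first step fails
  refine ⟨key, ?_⟩
  have hinvT : Tendsto (fun n => (ε n)⁻¹) atTop atTop := by
    apply Filter.Tendsto.inv_tendsto_nhdsGT_zero
    exact tendsto_nhdsWithin_of_tendsto_nhds_of_eventually_within _ hε0
      (Eventually.of_forall fun n => hεpos n)
  have hpow : Tendsto (fun n => ((ε n)⁻¹) ^ ((1:ℝ)/2)) atTop atTop :=
    (tendsto_rpow_atTop (by norm_num : (0:ℝ) < 1/2)).comp hinvT
  exact tendsto_atTop_mono' _ key hpow
end

section
/- In the bounded forecasting game, fix a rational q with K_0 < q < 1 and consider Reality's strategy: if p_n = 0 choose x_n > 0 with M_n x_n ≤ (q - K_{n-1})/2; if p_n = 1 choose x_n < 1 with M_n(x_n - 1) ≤ (q - K_{n-1})/2; if 0 < p_n < 1 set x_n = 1 when M_n ≤ 0 and x_n = 0 when M_n > 0. Then inductively K_n ≤ (q + K_{n-1})/2, and hence sup_n K_n ≤ q < 1 provided K_0 ≤ q. -/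
open Filter Finset

/-- In the bounded forecasting game, fix a rational `q` with `K 0 < q < 1`.
If Reality plays: for `p n = 0` some `x n > 0` with `M n * x n ≤ (q - K n)/2`;
for `p n = 1` some `x n < 1` with `M n * (x n - 1) ≤ (q - K n)/2`; and for
`0 < p n < 1`, `x n = 1` when `M n ≤ 0` and `x n = 0` when `M n > 0`; then
`K (n+1) ≤ (q + K n)/2` for all `n`, and hence `K n ≤ q < 1` for all `n`. -/
theorem stmt_17 (q : ℚ) (p M x K : ℕ → ℝ)
    (hp : ∀ n, p n ∈ Set.Icc (0 : ℝ) 1)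
    (hxb : ∀ n, x n ∈ Set.Icc (0 : ℝ) 1)
    (hK0 : K 0 < (q : ℝ)) (hq1 : (q : ℝ) < 1)
    (hrec : ∀ n, K (n + 1) = K n + M n * (x n - p n))
    (h0 : ∀ n, p n = 0 → 0 < x n ∧ M n * x n ≤ ((q : ℝ) - K n) / 2)
    (h1 : ∀ n, p n = 1 → x n < 1 ∧ M n * (x n - 1) ≤ ((q : ℝ) - K n) / 2)
    (hmid : ∀ n, 0 < p n → p n < 1 →
      (M n ≤ 0 → x n = 1) ∧ (0 < M n → x n = 0)) :
    (∀ n, K (n + 1) ≤ ((q : ℝ) + K n) / 2) ∧ ∀ n, K n ≤ (q : ℝ) := by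
  have key : ∀ n, K n ≤ (q : ℝ) → K (n + 1) ≤ ((q : ℝ) + K n) / 2 := by
    intro n hKq
    rcases (hp n).1.lt_or_eq with hp0 | hp0
    · rcases (hp n).2.lt_or_eq with hp1 | hp1
      · -- middle case
        rcases le_or_gt (M n) 0 with hM | hM
        · have hx := (hmid n hp0 hp1).1 hM
          have hstep : M n * (x n - p n) ≤ 0 := by
            apply mul_nonpos_of_nonpos_of_nonneg hM
            rw [hx]; linarith [(hp n).2]
          rw [hrec n]; linarith
        · have hx := (hmid n hp0 hp1).2 hM
          have hstep : M n * (x n - p n) ≤ 0 := by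
            apply mul_nonpos_of_nonneg_of_nonpos hM.le
            rw [hx]; linarith
          rw [hrec n]; linarith
      · -- p n = 1
        have h := h1 n hp1
        rw [hrec n, hp1]
        linarith [h.2]
    · -- p n = 0
      have h := h0 n hp0.symm
      rw [hrec n, ← hp0]
      have : M n * (x n - 0) = M n * x n := by ring
      rw [this]
      linarith [h.2]
  have hall : ∀ n, K n ≤ (q : ℝ) := by
    intro n
    induction n with
    | zero => exact hK0.le
    | succ k ih => have := key k ih; linarith
  exact ⟨fun n => key n (hall n), hall⟩
end

section
/- In the unbounded forecasting game, if Reality restricts her moves to x_n ∈ {0, n, -n} when v_n < n² and to x_n ∈ {√v_n, -√v_n} when v_n ≥ n², and announces x_n ≠ 0 if and only if c_n ≠ c_{n-1} (where c_n is the natural number with c_n - 1 ≤ ∑_{k=1}^n v_k/k² < c_n), then along the resulting path: ∑_n v_n/n² < ∞ if and only if x_n = 0 for all but finitely many n, if and only if (1/n)∑_{i=1}^n x_i → 0. -/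
open Filter Finset

/-- In the unbounded forecasting game with `m n = 0` and `v n > 0`, suppose
Reality restricts her moves to `{0, n, -n}` when `v n < n²` and to `{±√v n}`
when `v n ≥ n²` (here round `n+1` corresponds to index `n`), and announces a
nonzero move exactly when `c` increments, where `c n` is the natural number
with `c n - 1 ≤ ∑_{k ≤ n} v k / k² < c n`.  Then along the resulting path:
`∑ v n / n² < ∞` iff `x n = 0` for all but finitely many `n`, iff
`(1/n) ∑_{i ≤ n} x i → 0`. -/
theorem stmt_19 (v x : ℕ → ℝ) (c : ℕ → ℕ)
    (hv : ∀ n, 0 < v n)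
    (hc : ∀ n, (c n : ℝ) - 1 ≤ ∑ k ∈ Finset.range (n + 1), v k / ((k : ℝ) + 1) ^ 2 ∧
      ∑ k ∈ Finset.range (n + 1), v k / ((k : ℝ) + 1) ^ 2 < (c n : ℝ))
    (hsmall : ∀ n : ℕ, v n < ((n : ℝ) + 1) ^ 2 →
      x n = (n : ℝ) + 1 ∨ x n = -((n : ℝ) + 1) ∨ x n = 0)
    (hbig : ∀ n : ℕ, ((n : ℝ) + 1) ^ 2 ≤ v n →
      x n = Real.sqrt (v n) ∨ x n = -Real.sqrt (v n))
    (hzero0 : x 0 ≠ 0 ↔ c 0 ≠ 1)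
    (hzero : ∀ n, x (n + 1) ≠ 0 ↔ c (n + 1) ≠ c n) :
    (Summable (fun n => v n / ((n : ℝ) + 1) ^ 2) ↔
      (∀ᶠ n in atTop, x n = 0)) ∧
    ((∀ᶠ n in atTop, x n = 0) ↔
      Tendsto (fun n => (∑ i ∈ Finset.range n, x i) / (n : ℝ))
        atTop (nhds 0)) := by
  have hterm : ∀ k : ℕ, 0 < v k / ((k : ℝ) + 1) ^ 2 := fun k =>
    div_pos (hv k) (by positivity)
  -- c is monotone
  have hcmono : Monotone c := by
    apply monotone_nat_of_le_succ
    intro n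
    have h1 := (hc n).1
    have h2 := (hc (n + 1)).2
    have hle : (∑ k ∈ Finset.range (n + 1), v k / ((k : ℝ) + 1) ^ 2) ≤
        ∑ k ∈ Finset.range (n + 2), v k / ((k : ℝ) + 1) ^ 2 := by
      apply Finset.sum_le_sum_of_subset_of_nonneg
      · exact Finset.range_subset_range.mpr (by omega)
      · intro i _ _; exact (hterm i).le
    have hlt : (c n : ℝ) < (c (n + 1) : ℝ) + 1 := by linarith
    have : c n < c (n + 1) + 1 := by exact_mod_cast hlt
    omega
  -- if x n ≠ 0 then |x n| ≥ n + 1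
  have hxabs : ∀ n : ℕ, x n ≠ 0 → ((n : ℝ) + 1) ≤ |x n| := by
    intro n hne
    rcases lt_or_ge (v n) (((n : ℝ) + 1) ^ 2) with h | h
    · rcases hsmall n h with h1 | h1 | h1
      · rw [h1, abs_of_nonneg (by positivity)]
      · rw [h1, abs_neg, abs_of_nonneg (by positivity)]
      · exact absurd h1 hne
    · have hs : ((n : ℝ) + 1) ≤ Real.sqrt (v n) := by
        have : ((n : ℝ) + 1) = Real.sqrt (((n : ℝ) + 1) ^ 2) :=
          (Real.sqrt_sq (by positivity)).symm
        rw [this]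
        exact Real.sqrt_le_sqrt h
      have hs0 : (0 : ℝ) ≤ Real.sqrt (v n) := Real.sqrt_nonneg _
      rcases hbig n h with h1 | h1
      · rw [h1, abs_of_nonneg hs0]; exact hs
      · rw [h1, abs_neg, abs_of_nonneg hs0]; exact hs
  -- x eventually zero implies c eventually constant
  have hP2c : (∀ᶠ n in atTop, x n = 0) → ∃ N, ∀ n, N ≤ n → c n = c N := by
    intro hP2
    obtain ⟨N, hN⟩ := eventually_atTop.mp hP2
    refine ⟨N, fun n hn => ?_⟩
    refine Nat.le_induction rfl ?_ n hn
    intro m hm ih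
    have hx : x (m + 1) = 0 := hN (m + 1) (by omega)
    have hcm : c (m + 1) = c m := by
      by_contra hne
      exact (hzero m).mpr hne hx
    rw [hcm, ih]
  constructor
  · constructor
    · -- summable → eventually x = 0
      intro hsum
      set T := ∑' n, v n / ((n : ℝ) + 1) ^ 2 with hT
      have hSle : ∀ n, (∑ k ∈ Finset.range (n + 1), v k / ((k : ℝ) + 1) ^ 2) ≤ T :=
        fun n => Summable.sum_le_tsum _ (fun i _ => (hterm i).le) hsum
      have hcle : ∀ n, c n ≤ ⌈T + 1⌉₊ := by
        intro n
        have h1 := (hc n).1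
        have : (c n : ℝ) ≤ T + 1 := by linarith [hSle n]
        exact_mod_cast this.trans (Nat.le_ceil _)
      -- monotone bounded nat sequence is eventually constant
      have hbdd : BddAbove (Set.range c) := ⟨⌈T + 1⌉₊, by rintro _ ⟨n, rfl⟩; exact hcle n⟩
      have hmem : sSup (Set.range c) ∈ Set.range c :=
        Nat.sSup_mem ⟨c 0, Set.mem_range_self 0⟩ hbdd
      obtain ⟨N, hNs⟩ := hmem
      rw [eventually_atTop]
      refine ⟨N + 1, fun n hn => ?_⟩
      obtain ⟨m, rfl⟩ : ∃ m, n = m + 1 := ⟨n - 1, by omega⟩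
      have hmN : N ≤ m := by omega
      have h1 : c m = c N := le_antisymm (hNs ▸ le_csSup hbdd (Set.mem_range_self m))
        (hcmono hmN)
      have h2 : c (m + 1) = c N := le_antisymm
        (hNs ▸ le_csSup hbdd (Set.mem_range_self (m + 1))) (hcmono (by omega))
      by_contra hne
      exact (hzero m).mp hne (by rw [h1, h2])
    · -- eventually x = 0 → summable
      intro hP2
      obtain ⟨N, hcc⟩ := hP2c hP2
      have hcle : ∀ m, c m ≤ c N := by
        intro m
        rcases le_total m N with h | h
        · exact hcmono h
        · exact (hcc m h).le
      apply summable_of_sum_range_le (c := (c N : ℝ)) (fun i => (hterm i).le)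
      intro n
      cases n with
      | zero => simp
      | succ m =>
        have := (hc m).2
        have hle : (c m : ℝ) ≤ (c N : ℝ) := by exact_mod_cast hcle m
        linarith
  · constructor
    · -- eventually x = 0 → Cesàro tends to 0
      intro hP2
      obtain ⟨N, hN⟩ := eventually_atTop.mp hP2
      have hA : ∀ n, N ≤ n → (∑ i ∈ Finset.range n, x i) = ∑ i ∈ Finset.range N, x i := by
        intro n hn
        refine Nat.le_induction rfl ?_ n hn
        intro m hm ih
        rw [Finset.sum_range_succ, hN m hm, add_zero, ih]
      refine Tendsto.congr' ?_
        (tendsto_const_div_atTop_nhds_zero_nat (∑ i ∈ Finset.range N, x i))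
      filter_upwards [eventually_ge_atTop N] with n hn
      rw [hA n hn]
    · -- Cesàro → eventually x = 0
      intro hP3
      by_contra hP2
      rw [Filter.not_eventually] at hP2
      rw [Metric.tendsto_atTop] at hP3
      obtain ⟨N, hNd⟩ := hP3 (1 / 2) (by norm_num)
      obtain ⟨n, hxn, hn⟩ := (hP2.and_eventually (eventually_ge_atTop (max N 1))).exists
      have hnN : N ≤ n := le_trans (le_max_left _ _) hn
      have hn1 : 1 ≤ n := le_trans (le_max_right _ _) hn
      have d1 := hNd n hnN
      have d2 := hNd (n + 1) (by omega)
      rw [Real.dist_eq, sub_zero] at d1 d2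
      have hnpos : (0 : ℝ) < (n : ℝ) := by exact_mod_cast hn1
      have habs1 : |∑ i ∈ Finset.range n, x i| < (n : ℝ) / 2 := by
        rw [abs_div, Nat.abs_cast, div_lt_iff₀ hnpos] at d1
        linarith
      have habs2 : |∑ i ∈ Finset.range (n + 1), x i| < ((n : ℝ) + 1) / 2 := by
        have hpos : (0 : ℝ) < ((n : ℕ) + 1 : ℕ) := by positivity
        rw [abs_div, Nat.abs_cast, div_lt_iff₀ hpos] at d2
        push_cast at d2 ⊢
        linarith
      have hxeq : x n = (∑ i ∈ Finset.range (n + 1), x i) - ∑ i ∈ Finset.range n, x i := by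
        rw [Finset.sum_range_succ]; ring
      have htri : |x n| ≤ |∑ i ∈ Finset.range (n + 1), x i| + |∑ i ∈ Finset.range n, x i| := by
        rw [hxeq]; exact abs_sub _ _
      have hxa := hxabs n hxn
      linarith
end
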